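/- For every n ≥ 1 there exists exactly one solution of the n×n Pulsar puzzle; that is, there is a unique Latin square f of order n such that for every cell (r,c) ∈ C_n, f(r,c) equals the number of cells (r',c') ∈ C_n with f(r',c') = f(r,c). -/

import Mathlib

/-- The circled set `C n` of the `n × n` Pulsar puzzle, as a predicate on cells `(r, c)`
(1-indexed).  `C 1 = {(1,1)}`, and for `n ≥ 2`, a cell `(r,c)` of the grid is circled iff
`r = 1`, or `r ≥ 2`, `c ≥ 2` and `(n - c + 1, r - 1)` is circled in `C (n-1)`. -/
def Circled : ℕ → ℕ × ℕ → Prop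
  | 0, _ => False
  | 1, p => p = (1, 1)
  | (n + 2), (r, c) =>
      1 ≤ r ∧ r ≤ n + 2 ∧ 1 ≤ c ∧ c ≤ n + 2 ∧
        (r = 1 ∨ (2 ≤ r ∧ 2 ≤ c ∧ Circled (n + 1) (n + 2 - c + 1, r - 1)))

/-- `f` is a Latin square of order `n`: on the grid of cells `(r, c)` with `1 ≤ r, c ≤ n`
it takes values in `{1, …, n}`, with distinct values on distinct cells of any one row
and on distinct cells of any one column. -/
def IsLatinSquare (n : ℕ) (f : ℕ × ℕ → ℕ) : Prop :=
  (∀ r c, 1 ≤ r → r ≤ n → 1 ≤ c → c ≤ n → 1 ≤ f (r, c) ∧ f (r, c) ≤ n) ∧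
  (∀ r c₁ c₂, 1 ≤ r → r ≤ n → 1 ≤ c₁ → c₁ ≤ n → 1 ≤ c₂ → c₂ ≤ n → c₁ ≠ c₂ →
    f (r, c₁) ≠ f (r, c₂)) ∧
  (∀ r₁ r₂ c, 1 ≤ r₁ → r₁ ≤ n → 1 ≤ r₂ → r₂ ≤ n → 1 ≤ c → c ≤ n → r₁ ≠ r₂ →
    f (r₁, c) ≠ f (r₂, c))

/-- `f` is a solution of the `n × n` Pulsar puzzle: a Latin square of order `n` such that
each circled entry equals the number of circled cells carrying that same value. -/
def IsPulsarSolution (n : ℕ) (f : ℕ × ℕ → ℕ) : Prop :=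
  IsLatinSquare n f ∧
    ∀ p, Circled n p → f p = Set.ncard {q : ℕ × ℕ | Circled n q ∧ f q = f p}

open Finset


/-- row circled-count function -/
def ps : ℕ → ℕ → ℕ
  | 0, _ => 0
  | 1, _ => 1
  | (n+2), r => if r = 1 then n+2 else if r = 2 then 1 else 1 + ps n (n+3-r)

/-- column circled-count function -/
def pt : ℕ → ℕ → ℕ
  | 0, _ => 0
  | (n+1), c => if c = 1 then 1 else 1 + ps n (n+2-c)

lemma ps_succ_succ (n r : ℕ) (hr : 2 ≤ r) : ps (n+2) r = pt (n+1) (r-1) := by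
  rcases Nat.lt_or_ge r 3 with h | h
  · interval_cases r <;> simp [ps, pt]
  · have h1 : ¬ (r = 1) := by omega
    have h2 : ¬ (r = 2) := by omega
    have h3 : ¬ (r - 1 = 1) := by omega
    simp only [ps, pt, if_neg h1, if_neg h2, if_neg h3]
    have : n + 2 - (r - 1) = n + 3 - r := by omega
    rw [this]

lemma image_sub_one (a b : ℕ) (ha : 1 ≤ a) : (Icc (a+1) (b+1)).image (· - 1) = Icc a b := by
  ext x
  simp only [mem_image, mem_Icc]
  constructor
  · rintro ⟨y, ⟨h1, h2⟩, rfl⟩; omega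
  · intro ⟨h1, h2⟩; exact ⟨x+1, ⟨by omega, by omega⟩, by omega⟩

lemma image_flip (n : ℕ) : (Icc (2:ℕ) (n+2)).image (n+3 - ·) = Icc 1 (n+1) := by
  ext x
  simp only [mem_image, mem_Icc]
  constructor
  · rintro ⟨y, ⟨h1, h2⟩, rfl⟩; omega
  · intro ⟨h1, h2⟩; exact ⟨n+3-x, by omega, by omega⟩

lemma ps_pt_image_one : (Icc 1 1).image (ps 1) = Icc 1 1 ∧ (Icc 1 1).image (pt 1) = Icc 1 1 := by
  constructor <;>
  · ext x
    simp only [mem_image, mem_Icc, ps, pt]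
    constructor
    · rintro ⟨y, hy, rfl⟩
      first
      | omega
      | (split_ifs <;> (try simp only [ps]) <;> omega)
    · intro hx
      refine ⟨1, by omega, ?_⟩
      first
      | omega
      | (split_ifs <;> (try simp only [ps]) <;> omega)

lemma ps_pt_image : ∀ n : ℕ, 1 ≤ n →
    (Icc 1 n).image (ps n) = Icc 1 n ∧ (Icc 1 n).image (pt n) = Icc 1 n := by
  intro n
  induction n using Nat.strong_induction_on with
  | _ n ih =>
    intro hn
    rcases n with _ | _ | n
    · omega
    · exact ps_pt_image_one
    · obtain ⟨ihs, iht⟩ := ih (n+1) (by omega) (by omega)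
      have hsplit : Icc (1:ℕ) (n+2) = insert 1 (Icc 2 (n+2)) := by
        ext x; simp [mem_Icc, mem_insert]; omega
      constructor
      · rw [hsplit, image_insert]
        have : (Icc (2:ℕ) (n+2)).image (ps (n+2)) = (Icc 1 (n+1)).image (pt (n+1)) := by
          rw [show Icc (1:ℕ) (n+1) = (Icc (2:ℕ) (n+2)).image (· - 1) from
            (image_sub_one 1 (n+1) le_rfl).symm]
          rw [image_image]
          apply image_congr
          intro x hx
          simp only [mem_coe, mem_Icc] at hx
          exact ps_succ_succ n x hx.1
        rw [this, iht]
        simp only [ps, if_pos rfl]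
        ext x; simp [mem_insert, mem_Icc]; omega
      · rw [hsplit, image_insert]
        have : (Icc (2:ℕ) (n+2)).image (pt (n+2)) = ((Icc 1 (n+1)).image (ps (n+1))).image (1 + ·) := by
          rw [show Icc (1:ℕ) (n+1) = (Icc (2:ℕ) (n+2)).image (n+3 - ·) from (image_flip n).symm]
          rw [image_image, image_image]
          apply image_congr
          intro x hx
          simp only [mem_coe, mem_Icc] at hx
          have : ¬ (x = 1) := by omega
          simp only [pt, if_neg this]
          congr 1
        rw [this, ihs]
        simp only [pt, if_pos rfl]
        ext x; simp [mem_insert, mem_image, mem_Icc]; omega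

lemma ps_image (n : ℕ) (hn : 1 ≤ n) : (Icc 1 n).image (ps n) = Icc 1 n :=
  (ps_pt_image n hn).1
lemma pt_image (n : ℕ) (hn : 1 ≤ n) : (Icc 1 n).image (pt n) = Icc 1 n :=
  (ps_pt_image n hn).2

lemma ps_mem {n r : ℕ} (hn : 1 ≤ n) (h : r ∈ Icc 1 n) : ps n r ∈ Icc 1 n := by
  rw [← ps_image n hn]; exact mem_image_of_mem _ h
lemma pt_mem {n c : ℕ} (hn : 1 ≤ n) (h : c ∈ Icc 1 n) : pt n c ∈ Icc 1 n := by
  rw [← pt_image n hn]; exact mem_image_of_mem _ h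

lemma ps_injOn (n : ℕ) (hn : 1 ≤ n) : Set.InjOn (ps n) (Icc 1 n) := by
  apply Finset.injOn_of_card_image_eq
  rw [ps_image n hn]
lemma pt_injOn (n : ℕ) (hn : 1 ≤ n) : Set.InjOn (pt n) (Icc 1 n) := by
  apply Finset.injOn_of_card_image_eq
  rw [pt_image n hn]

lemma ps_one (n : ℕ) (hn : 1 ≤ n) : ps n 1 = n := by
  rcases n with _ | _ | n <;> simp [ps]
lemma pt_one (n : ℕ) (hn : 1 ≤ n) : pt n 1 = 1 := by
  rcases n with _ | n <;> simp [pt] at *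

lemma pt_succ (n c : ℕ) (hc : 2 ≤ c) : pt (n+1) c = 1 + ps n (n+2-c) := by
  have : ¬ (c = 1) := by omega
  simp [pt, this]

/-- the key characterization of the circled set -/
lemma circled_iff : ∀ n r c : ℕ, Circled n (r, c) ↔
    (1 ≤ r ∧ r ≤ n ∧ 1 ≤ c ∧ c ≤ n ∧ n + 1 ≤ ps n r + pt n c) := by
  intro n
  induction n using Nat.strong_induction_on with
  | _ n ih =>
    rcases n with _ | _ | n
    · intro r c
      constructor
      · intro h; exact absurd h (by simp [Circled])
      · rintro ⟨h1, h2, -⟩; omega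
    · intro r c
      simp only [Circled, ps, pt, Prod.mk.injEq]
      constructor
      · rintro ⟨rfl, rfl⟩
        refine ⟨le_rfl, le_rfl, le_rfl, le_rfl, ?_⟩
        simp
      · rintro ⟨h1, h2, h3, h4, -⟩
        omega
    · intro r c
      simp only [Circled]
      simp only [show ∀ m:ℕ, m+1+1 = m+2 from fun _ => rfl]
      constructor
      · rintro ⟨hr1, hr2, hc1, hc2, hcase⟩
        refine ⟨hr1, hr2, hc1, hc2, ?_⟩
        rcases hcase with rfl | ⟨hr, hc, hin⟩
        · rw [ps_one (n+2) (by omega)]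
          have := pt_mem (n := n+2) (c := c) (by omega) (by simp [mem_Icc]; omega)
          simp [mem_Icc] at this
          omega
        · rw [ih (n+1) (by omega) (n+2-c+1) (r-1)] at hin
          obtain ⟨-, -, -, -, hin⟩ := hin
          rw [ps_succ_succ n r hr, pt_succ (n+1) c hc]
          have : n+1+2-c = n+2-c+1 := by omega
          rw [this]
          omega
      · rintro ⟨hr1, hr2, hc1, hc2, hsum⟩
        refine ⟨hr1, hr2, hc1, hc2, ?_⟩
        rcases Nat.eq_or_lt_of_le hr1 with h1 | hr
        · left; omega
        · right
          refine ⟨hr, ?_, ?_⟩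
          · -- c ≥ 2 : else pt = 1 and ps r would have to be n+2, forcing r = 1
            by_contra hc
            have hc1' : c = 1 := by omega
            subst hc1'
            rw [pt_one (n+2) (by omega)] at hsum
            have hpsr : ps (n+2) r ∈ Icc 1 (n+2) := ps_mem (by omega) (by simp [mem_Icc]; omega)
            simp [mem_Icc] at hpsr
            have heq : ps (n+2) r = n+2 := by omega
            have : r = 1 := by
              apply ps_injOn (n+2) (by omega) (by simp [mem_Icc]; omega)
                (by simp [mem_Icc] : (1:ℕ) ∈ Icc 1 (n+2))
              rw [heq, ps_one (n+2) (by omega)]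
            omega
          · have hc : 2 ≤ c := by
              by_contra hc
              have hc1' : c = 1 := by omega
              subst hc1'
              rw [pt_one (n+2) (by omega)] at hsum
              have hpsr : ps (n+2) r ∈ Icc 1 (n+2) := ps_mem (by omega) (by simp [mem_Icc]; omega)
              simp [mem_Icc] at hpsr
              have heq : ps (n+2) r = n+2 := by omega
              have : r = 1 := by
                apply ps_injOn (n+2) (by omega) (by simp [mem_Icc]; omega)
                  (by simp [mem_Icc] : (1:ℕ) ∈ Icc 1 (n+2))
                rw [heq, ps_one (n+2) (by omega)]
              omega
            rw [ih (n+1) (by omega) (n+2-c+1) (r-1)]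
            rw [ps_succ_succ n r (by omega), pt_succ (n+1) c hc] at hsum
            have he : n+1+2-c = n+2-c+1 := by omega
            rw [he] at hsum
            have hptm : pt (n+1) (r-1) ∈ Icc 1 (n+1) := pt_mem (by omega) (by simp [mem_Icc]; omega)
            have hpsm : ps (n+1) (n+2-c+1) ∈ Icc 1 (n+1) := ps_mem (by omega) (by simp [mem_Icc]; omega)
            simp [mem_Icc] at hptm hpsm
            refine ⟨by omega, by omega, by omega, by omega, by omega⟩

open scoped Classical

/-- transfer cardinality of a filter along an injective image -/
lemma card_filter_comp (f : ℕ → ℕ) (s s' : Finset ℕ)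
    (himg : s.image f = s') (hinj : Set.InjOn f s) (P : ℕ → Prop) [DecidablePred P] :
    (s.filter (fun a => P (f a))).card = (s'.filter P).card := by
  subst himg
  rw [Finset.filter_image]
  exact (Finset.card_image_of_injOn (hinj.mono (fun x hx => (Finset.mem_filter.mp hx).1))).symm

lemma sum_comp_eq (f : ℕ → ℕ) (s s' : Finset ℕ)
    (himg : s.image f = s') (hinj : Set.InjOn f s) (g : ℕ → ℕ) :
    ∑ a ∈ s, g (f a) = ∑ b ∈ s', g b := by
  subst himg
  exact (Finset.sum_image (fun x hx y hy hxy => hinj hx hy hxy)).symm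

lemma filter_Icc_card (n u : ℕ) (hu1 : 1 ≤ u) (hu2 : u ≤ n) :
    ((Icc 1 n).filter (fun v => n + 1 ≤ u + v)).card = u := by
  have : ((Icc 1 n).filter (fun v => n + 1 ≤ u + v)) = Icc (n+1-u) n := by
    ext v; simp [mem_filter, mem_Icc]; omega
  rw [this, Nat.card_Icc]
  omega

/-- the unique pulsar solution -/
def pg (n : ℕ) (p : ℕ × ℕ) : ℕ := n - (ps n p.1 + pt n p.2 - 1) % n

lemma pg_eq (n u v : ℕ) (hu1 : 1 ≤ u) (hu2 : u ≤ n) (hv1 : 1 ≤ v) (hv2 : v ≤ n) :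
    u + v + (n - (u + v - 1) % n) = n + 1 + (if n + 1 ≤ u + v then n else 0) ∧
      1 ≤ n - (u + v - 1) % n ∧ n - (u + v - 1) % n ≤ n := by
  have hn : 1 ≤ n := hu2.trans' hu1
  rcases Nat.lt_or_ge (u + v - 1) n with H | H
  · rw [Nat.mod_eq_of_lt H]
    simp only [if_neg (by omega : ¬ (n + 1 ≤ u + v))]
    omega
  · rw [Nat.mod_eq_sub_mod H, Nat.mod_eq_of_lt (by omega)]
    simp only [if_pos (by omega : n + 1 ≤ u + v)]
    omega

lemma pg_mem (n : ℕ) (hn : 1 ≤ n) {r c : ℕ} (hr : r ∈ Icc 1 n) (hc : c ∈ Icc 1 n) :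
    pg n (r, c) ∈ Icc 1 n := by
  simp only [mem_Icc] at *
  have hu := ps_mem hn (by simp [mem_Icc]; omega : r ∈ Icc 1 n)
  have hv := pt_mem hn (by simp [mem_Icc]; omega : c ∈ Icc 1 n)
  simp only [mem_Icc] at hu hv
  have := pg_eq n (ps n r) (pt n c) hu.1 hu.2 hv.1 hv.2
  exact ⟨this.2.1, this.2.2⟩

lemma pg_inj_aux (n u v₁ v₂ : ℕ) (hu1 : 1 ≤ u) (hu2 : u ≤ n) (hv1 : 1 ≤ v₁) (hv2 : v₁ ≤ n)
    (hw1 : 1 ≤ v₂) (hw2 : v₂ ≤ n)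
    (heq : n - (u + v₁ - 1) % n = n - (u + v₂ - 1) % n) : v₁ = v₂ := by
  have h1 := pg_eq n u v₁ hu1 hu2 hv1 hv2
  have h2 := pg_eq n u v₂ hu1 hu2 hw1 hw2
  obtain ⟨e1, -, -⟩ := h1
  obtain ⟨e2, -, -⟩ := h2
  rw [heq] at e1
  split_ifs at e1 e2 <;> omega

def gridF (n : ℕ) : Finset (ℕ × ℕ) := Icc 1 n ×ˢ Icc 1 n

lemma circled_mem_grid {n : ℕ} {q : ℕ × ℕ} (hq : Circled n q) : q ∈ gridF n := by
  obtain ⟨r, c⟩ := q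
  rw [circled_iff] at hq
  simp [gridF, Finset.mem_product, mem_Icc]
  omega

lemma mem_Icc_of (n x : ℕ) (h1 : 1 ≤ x) (h2 : x ≤ n) : x ∈ Icc 1 n := by
  simp [mem_Icc]; omega

lemma pg_latin (n : ℕ) (hn : 1 ≤ n) : IsLatinSquare n (pg n) := by
  refine ⟨?_, ?_, ?_⟩
  · intro r c h1 h2 h3 h4
    have := pg_mem n hn (mem_Icc_of n r h1 h2) (mem_Icc_of n c h3 h4)
    simpa [mem_Icc] using this
  · intro r c₁ c₂ h1 h2 h3 h4 h5 h6 hne heq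
    have hu := ps_mem hn (mem_Icc_of n r h1 h2); simp [mem_Icc] at hu
    have hv := pt_mem hn (mem_Icc_of n c₁ h3 h4); simp [mem_Icc] at hv
    have hw := pt_mem hn (mem_Icc_of n c₂ h5 h6); simp [mem_Icc] at hw
    have := pg_inj_aux n (ps n r) (pt n c₁) (pt n c₂) hu.1 hu.2 hv.1 hv.2 hw.1 hw.2 heq
    exact hne (pt_injOn n hn (mem_Icc_of n c₁ h3 h4) (mem_Icc_of n c₂ h5 h6) this)
  · intro r₁ r₂ c h1 h2 h3 h4 h5 h6 hne heq
    have hu := ps_mem hn (mem_Icc_of n r₁ h1 h2); simp [mem_Icc] at hu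
    have hw := ps_mem hn (mem_Icc_of n r₂ h3 h4); simp [mem_Icc] at hw
    have hv := pt_mem hn (mem_Icc_of n c h5 h6); simp [mem_Icc] at hv
    have heq' : n - (pt n c + ps n r₁ - 1) % n = n - (pt n c + ps n r₂ - 1) % n := by
      simp only [pg] at heq
      rw [Nat.add_comm (pt n c) (ps n r₁), Nat.add_comm (pt n c) (ps n r₂)]
      exact heq
    have := pg_inj_aux n (pt n c) (ps n r₁) (ps n r₂) hv.1 hv.2 hu.1 hu.2 hw.1 hw.2 heq'
    exact hne (ps_injOn n hn (mem_Icc_of n r₁ h1 h2) (mem_Icc_of n r₂ h3 h4) this)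

lemma ncard_to_card (n k : ℕ) (h : ℕ × ℕ → ℕ) :
    {q : ℕ × ℕ | Circled n q ∧ h q = k}.ncard
      = ((gridF n).filter (fun q => Circled n q ∧ h q = k)).card := by
  have hset : {q : ℕ × ℕ | Circled n q ∧ h q = k}
      = ↑((gridF n).filter (fun q => Circled n q ∧ h q = k)) := by
    ext q
    simp only [Set.mem_setOf_eq, Finset.coe_filter, Set.mem_setOf_eq, Finset.mem_coe]
    constructor
    · intro hq; exact ⟨circled_mem_grid hq.1, hq⟩
    · intro hq; exact hq.2
  rw [hset, Set.ncard_coe_finset]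

lemma fiber_card (n : ℕ) (P : ℕ × ℕ → Prop) [DecidablePred P] (r : ℕ) :
    (((gridF n).filter P).filter (fun q => q.1 = r)).card
      = ((Icc 1 n).filter (fun c => r ∈ Icc 1 n ∧ P (r, c))).card := by
  apply Finset.card_bij' (i := fun q _ => q.2) (j := fun c _ => (r, c))
  case hi =>
    intro q hq
    simp only [Finset.mem_filter, gridF, Finset.mem_product] at hq
    obtain ⟨⟨⟨hq1, hq2⟩, hq3⟩, hq4⟩ := hq
    simp only [Finset.mem_filter]
    subst hq4
    exact ⟨hq2, hq1, hq3⟩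
  case hj =>
    intro c hc
    simp only [Finset.mem_filter] at hc
    simp only [Finset.mem_filter, gridF, Finset.mem_product]
    exact ⟨⟨⟨hc.2.1, hc.1⟩, hc.2.2⟩, trivial⟩
  case left_inv =>
    intro q hq
    simp only [Finset.mem_filter] at hq
    exact Prod.ext hq.2.symm rfl
  case right_inv =>
    intro c hc
    rfl

lemma grid_card_sum (n : ℕ) (P : ℕ × ℕ → Prop) [DecidablePred P] :
    ((gridF n).filter P).card
      = ∑ r ∈ Icc 1 n, ((Icc 1 n).filter (fun c => P (r, c))).card := by
  rw [Finset.card_eq_sum_card_fiberwise (f := Prod.fst) (t := Icc 1 n)]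
  · apply Finset.sum_congr rfl
    intro r hr
    rw [fiber_card n P r]
    apply congrArg
    apply Finset.filter_congr
    intro c hc
    simp [hr]
  · intro q hq
    simp only [Finset.mem_coe, Finset.mem_filter, gridF, Finset.mem_product] at hq
    exact hq.1.1

lemma single_col_card (n u k : ℕ) (hu1 : 1 ≤ u) (hu2 : u ≤ n) (hk1 : 1 ≤ k) (hk2 : k ≤ n) :
    ((Icc 1 n).filter (fun v => u + v + k = 2 * n + 1)).card
      = if n + 1 ≤ u + k then 1 else 0 := by
  split_ifs with H
  · have : ((Icc 1 n).filter (fun v => u + v + k = 2 * n + 1)) = {2 * n + 1 - u - k} := by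
      ext v; simp [mem_filter, mem_Icc]; omega
    rw [this]; rfl
  · have : ((Icc 1 n).filter (fun v => u + v + k = 2 * n + 1)) = ∅ := by
      ext v; simp [mem_filter, mem_Icc]; omega
    rw [this]; rfl

lemma count_pg (n : ℕ) (hn : 1 ≤ n) (k : ℕ) (hk1 : 1 ≤ k) (hk2 : k ≤ n) :
    ((gridF n).filter (fun q => Circled n q ∧ pg n q = k)).card = k := by
  have hfc : (gridF n).filter (fun q => Circled n q ∧ pg n q = k)
      = (gridF n).filter (fun q => ps n q.1 + pt n q.2 + k = 2 * n + 1) := by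
    apply Finset.filter_congr
    rintro ⟨r, c⟩ hq
    dsimp only
    simp only [gridF, Finset.mem_product, mem_Icc] at hq
    have hu := ps_mem hn (mem_Icc_of n r hq.1.1 hq.1.2); simp [mem_Icc] at hu
    have hv := pt_mem hn (mem_Icc_of n c hq.2.1 hq.2.2); simp [mem_Icc] at hv
    have heq := pg_eq n (ps n r) (pt n c) hu.1 hu.2 hv.1 hv.2
    constructor
    · rintro ⟨hcirc, hpg⟩
      rw [circled_iff] at hcirc
      obtain ⟨-, -, -, -, hsum⟩ := hcirc
      rw [if_pos hsum] at heq
      simp only [pg] at hpg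
      omega
    · intro hsum
      have hge : n + 1 ≤ ps n r + pt n c := by omega
      refine ⟨?_, ?_⟩
      · rw [circled_iff]; exact ⟨hq.1.1, hq.1.2, hq.2.1, hq.2.2, hge⟩
      · rw [if_pos hge] at heq
        simp only [pg]
        omega
  rw [hfc, grid_card_sum n (fun q => ps n q.1 + pt n q.2 + k = 2 * n + 1)]
  have hstep : ∀ r ∈ Icc 1 n,
      ((Icc 1 n).filter (fun c => ps n r + pt n c + k = 2 * n + 1)).card
        = if n + 1 ≤ ps n r + k then 1 else 0 := by
    intro r hr
    have hu := ps_mem hn hr; simp [mem_Icc] at hu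
    rw [card_filter_comp (pt n) (Icc 1 n) (Icc 1 n) (pt_image n hn) (pt_injOn n hn)
      (fun v => ps n r + v + k = 2 * n + 1)]
    exact single_col_card n (ps n r) k hu.1 hu.2 hk1 hk2
  rw [Finset.sum_congr rfl hstep]
  rw [← Finset.card_filter]
  rw [card_filter_comp (ps n) (Icc 1 n) (Icc 1 n) (ps_image n hn) (ps_injOn n hn)
    (fun u => n + 1 ≤ u + k)]
  have : ((Icc 1 n).filter (fun u => n + 1 ≤ u + k)) = (Icc 1 n).filter (fun u => n + 1 ≤ k + u) := by
    apply Finset.filter_congr; intro u hu; constructor <;> intro h <;> omega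
  rw [this]
  exact filter_Icc_card n k hk1 hk2

lemma pg_solution (n : ℕ) (hn : 1 ≤ n) : IsPulsarSolution n (pg n) := by
  refine ⟨pg_latin n hn, ?_⟩
  intro p hp
  have hpg := circled_mem_grid hp
  simp only [gridF, Finset.mem_product, mem_Icc] at hpg
  obtain ⟨r, c⟩ := p
  have hk := pg_mem n hn (mem_Icc_of n r hpg.1.1 hpg.1.2) (mem_Icc_of n c hpg.2.1 hpg.2.2)
  simp [mem_Icc] at hk
  rw [ncard_to_card n (pg n (r, c)) (pg n)]
  rw [count_pg n hn _ hk.1 hk.2]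

section Uniq

variable {n : ℕ} {h : ℕ × ℕ → ℕ} (hn : 1 ≤ n) (hL : IsLatinSquare n h)
  (hC : ∀ p, Circled n p → h p = Set.ncard {q : ℕ × ℕ | Circled n q ∧ h q = h p})

include hn hL

lemma hval {r c : ℕ} (hr : r ∈ Icc 1 n) (hc : c ∈ Icc 1 n) : h (r, c) ∈ Icc 1 n := by
  simp only [mem_Icc] at *
  exact (by simpa [mem_Icc] using hL.1 r c hr.1 hr.2 hc.1 hc.2)

lemma row_injOn (r : ℕ) (hr : r ∈ Icc 1 n) :
    Set.InjOn (fun c => h (r, c)) (Icc 1 n) := by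
  intro c₁ hc₁ c₂ hc₂ heq
  simp only [Finset.coe_insert, mem_coe, mem_Icc] at hc₁ hc₂
  by_contra hne
  exact hL.2.1 r c₁ c₂ (by simp [mem_Icc] at hr; omega) (by simp [mem_Icc] at hr; omega)
    hc₁.1 hc₁.2 hc₂.1 hc₂.2 hne heq

lemma row_surj' : ∀ r k : ℕ, ∃ c : ℕ, r ∈ Icc 1 n → k ∈ Icc 1 n →
    (c ∈ Icc 1 n ∧ h (r, c) = k) := by
  intro r k
  by_cases hr : r ∈ Icc 1 n
  · by_cases hk : k ∈ Icc 1 n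
    · have himg : (Icc 1 n).image (fun c => h (r, c)) = Icc 1 n := by
        apply Finset.eq_of_subset_of_card_le
        · intro x hx
          simp only [Finset.mem_image] at hx
          obtain ⟨c, hc, rfl⟩ := hx
          exact hval hn hL hr hc
        · rw [Finset.card_image_of_injOn (row_injOn hn hL r hr)]
      have hkim : k ∈ (Icc 1 n).image (fun c => h (r, c)) := by rw [himg]; exact hk
      simp only [Finset.mem_image] at hkim
      obtain ⟨c, hc, hck⟩ := hkim
      exact ⟨c, fun _ _ => ⟨hc, hck⟩⟩
    · exact ⟨0, fun _ hk' => absurd hk' hk⟩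
  · exact ⟨0, fun hr' _ => absurd hr' hr⟩

/-- count of circled cells with value k -/
noncomputable def mk (n : ℕ) (h : ℕ × ℕ → ℕ) (k : ℕ) : ℕ :=
  ((gridF n).filter (fun q => Circled n q ∧ h q = k)).card

omit hn hL in
include hC in
lemma hsolk : ∀ p, Circled n p → h p = mk n h (h p) := by
  intro p hp
  have hthis := hC p hp
  rw [ncard_to_card n (h p) h] at hthis
  exact hthis

lemma row_circ_count (r : ℕ) (hr : r ∈ Icc 1 n) :
    ((Icc 1 n).filter (fun c => Circled n (r, c))).card = ps n r := by
  have hu := ps_mem hn hr; simp only [mem_Icc] at hu hr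
  have : (Icc 1 n).filter (fun c => Circled n (r, c))
      = (Icc 1 n).filter (fun c => n + 1 ≤ ps n r + pt n c) := by
    apply Finset.filter_congr
    intro c hc
    simp only [mem_Icc] at hc
    rw [circled_iff]
    constructor
    · rintro ⟨-, -, -, -, hs⟩; exact hs
    · intro hs; exact ⟨hr.1, hr.2, hc.1, hc.2, hs⟩
  rw [this, card_filter_comp (pt n) (Icc 1 n) (Icc 1 n) (pt_image n hn) (pt_injOn n hn)
    (fun v => n + 1 ≤ ps n r + v)]
  exact filter_Icc_card n (ps n r) hu.1 hu.2

lemma gauss : ∀ m : ℕ, 2 * ∑ u ∈ Icc 1 m, u = m * (m + 1) := by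
  intro m
  induction m with
  | zero => simp
  | succ m ih =>
    have : Icc 1 (m + 1) = insert (m + 1) (Icc 1 m) := by
      ext x; simp [mem_Icc, mem_insert]; omega
    rw [this, Finset.sum_insert (by simp [mem_Icc])]
    have hr : (m + 1) * (m + 1 + 1) = m * (m + 1) + 2 * (m + 1) := by ring
    omega

lemma CnF_card : ((gridF n).filter (fun q => Circled n q)).card = ∑ u ∈ Icc 1 n, u := by
  rw [grid_card_sum n (fun q => Circled n q)]
  rw [Finset.sum_congr rfl (fun r hr => row_circ_count hn hL r hr)]
  exact sum_comp_eq (ps n) (Icc 1 n) (Icc 1 n) (ps_image n hn) (ps_injOn n hn) id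

include hC in
lemma mk_eq : ∀ k ∈ Icc 1 n, mk n h k = k := by
  have htot : ∑ k ∈ Icc 1 n, mk n h k = ∑ u ∈ Icc 1 n, u := by
    rw [← CnF_card hn hL]
    rw [Finset.card_eq_sum_card_fiberwise (f := h) (t := Icc 1 n)]
    · apply Finset.sum_congr rfl
      intro k hk
      rw [Finset.filter_filter]
      rfl
    · intro q hq
      simp only [Finset.mem_coe, Finset.mem_filter, gridF, Finset.mem_product] at hq
      obtain ⟨⟨hq1, hq2⟩, -⟩ := hq
      obtain ⟨r, c⟩ := q
      exact hval hn hL hq1 hq2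
  have hne : ∀ k ∈ Icc 1 n, mk n h k ≠ 0 → mk n h k = k := by
    intro k hk hkne
    have : ((gridF n).filter (fun q => Circled n q ∧ h q = k)).Nonempty := by
      rw [← Finset.card_pos]
      exact Nat.pos_of_ne_zero hkne
    obtain ⟨p, hp⟩ := this
    simp only [Finset.mem_filter] at hp
    have := hsolk hC p hp.2.1
    rw [hp.2.2] at this
    omega
  -- the set of k with nonzero count is all of Icc
  intro k hk
  by_contra hkk
  have hk0 : mk n h k = 0 := by
    by_contra h0
    exact hkk (hne k hk h0)
  set T := (Icc 1 n).filter (fun k => mk n h k ≠ 0) with hT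
  have hsub : T ⊆ Icc 1 n := Finset.filter_subset _ _
  have hTs : ∑ j ∈ T, mk n h j = ∑ j ∈ Icc 1 n, mk n h j := by
    apply Finset.sum_subset hsub
    intro x hx hxT
    simp only [hT, Finset.mem_filter, not_and, not_not] at hxT
    exact hxT hx
  have hTk : ∑ j ∈ T, mk n h j = ∑ j ∈ T, j := by
    apply Finset.sum_congr rfl
    intro j hj
    simp only [hT, Finset.mem_filter] at hj
    exact hne j hj.1 hj.2
  have hsdiff : ∑ j ∈ Icc 1 n \ T, j + ∑ j ∈ T, j = ∑ j ∈ Icc 1 n, j :=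
    Finset.sum_sdiff hsub
  have hzero : ∑ j ∈ Icc 1 n \ T, j = 0 := by omega
  have hkT : k ∈ Icc 1 n \ T := by
    simp only [Finset.mem_sdiff, hT, Finset.mem_filter]
    exact ⟨hk, fun hc => hc.2 hk0⟩
  have := (Finset.sum_eq_zero_iff.mp hzero) k hkT
  simp only [mem_Icc] at hk
  omega

end Uniq

section Uniq2

variable {n : ℕ} {h : ℕ × ℕ → ℕ} (hn : 1 ≤ n) (hL : IsLatinSquare n h)
  (hC : ∀ p, Circled n p → h p = Set.ncard {q : ℕ × ℕ | Circled n q ∧ h q = h p})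

include hn hL

/-- the set of values on circled cells of row r -/
noncomputable def Vr (n : ℕ) (h : ℕ × ℕ → ℕ) (r : ℕ) : Finset ℕ :=
  ((Icc 1 n).filter (fun c => Circled n (r, c))).image (fun c => h (r, c))

omit hn in
lemma mrows_card (k : ℕ) :
    ((Icc 1 n).filter (fun r => k ∈ Vr n h r)).card = mk n h k := by
  classical
  rw [eq_comm]
  apply Finset.card_bij (i := fun q _ => q.1)
  · rintro ⟨r, c⟩ hq
    simp only [Finset.mem_filter, gridF, Finset.mem_product] at hq
    obtain ⟨⟨hr, hc⟩, hcirc, hval⟩ := hq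
    simp only [Finset.mem_filter, Vr, Finset.mem_image]
    refine ⟨hr, c, ?_, hval⟩
    first
    | exact ⟨hc, hcirc⟩
    | (simp only [Finset.mem_filter]; exact ⟨hc, hcirc⟩)
  · rintro ⟨r₁, c₁⟩ hq₁ ⟨r₂, c₂⟩ hq₂ heq
    obtain rfl : r₁ = r₂ := heq
    simp only [Finset.mem_filter, gridF, Finset.mem_product, mem_Icc] at hq₁ hq₂
    obtain ⟨⟨hr₁, hc₁⟩, hcirc₁, hv₁⟩ := hq₁
    obtain ⟨⟨-, hc₂⟩, hcirc₂, hv₂⟩ := hq₂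
    have : c₁ = c₂ := by
      by_contra hne
      exact hL.2.1 r₁ c₁ c₂ hr₁.1 hr₁.2 hc₁.1 hc₁.2 hc₂.1 hc₂.2 hne (by rw [hv₁, hv₂])
    rw [this]
  · intro r hr
    simp only [Finset.mem_filter, Vr, Finset.mem_image] at hr
    obtain ⟨hr', c, hc, hvc⟩ := hr
    have hc' : c ∈ Icc 1 n ∧ Circled n (r, c) := by
      first
      | exact hc
      | exact Finset.mem_filter.mp hc
    exact ⟨(r, c), by
      simp only [Finset.mem_filter, gridF, Finset.mem_product]
      exact ⟨⟨hr', hc'.1⟩, hc'.2, hvc⟩, rfl⟩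

lemma Vr_card (r : ℕ) (hr : r ∈ Icc 1 n) : (Vr n h r).card = ps n r := by
  rw [Vr, Finset.card_image_of_injOn, row_circ_count hn hL r hr]
  exact (row_injOn hn hL r hr).mono (by intro x hx; simp only [Finset.coe_filter, Set.mem_setOf_eq, mem_coe] at hx ⊢; exact hx.1)

lemma sum_min (j : ℕ) (hj : j ≤ n) :
    ∑ u ∈ Icc 1 n, min u j = ∑ k ∈ Icc (n + 1 - j) n, k := by
  induction j with
  | zero => simp
  | succ j ih =>
    have hj' : j ≤ n := by omega
    have step : ∀ u ∈ Icc 1 n, min u (j + 1) = min u j + (if j + 1 ≤ u then 1 else 0) := by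
      intro u hu
      split_ifs with H <;> omega
    rw [Finset.sum_congr rfl step, Finset.sum_add_distrib, ih hj']
    rw [← Finset.card_filter]
    have hfil : (Icc 1 n).filter (fun u => j + 1 ≤ u) = Icc (j + 1) n := by
      ext u; simp [mem_filter, mem_Icc]; omega
    rw [hfil, Nat.card_Icc]
    have hins : Icc (n - j) n = insert (n - j) (Icc (n + 1 - j) n) := by
      ext x; simp [mem_Icc, mem_insert]; omega
    rw [show n + 1 - (j + 1) = n - j by omega, hins,
      Finset.sum_insert (by simp [mem_Icc]; omega)]
    omega

include hC in
lemma Vr_top (j : ℕ) (hj : j ≤ n) :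
    ∀ r ∈ Icc 1 n, (Vr n h r ∩ Icc (n + 1 - j) n).card = min (ps n r) j := by
  classical
  have hpoint : ∀ r ∈ Icc 1 n, (Vr n h r ∩ Icc (n + 1 - j) n).card ≤ min (ps n r) j := by
    intro r hr
    apply le_min
    · calc (Vr n h r ∩ Icc (n + 1 - j) n).card ≤ (Vr n h r).card :=
            Finset.card_le_card Finset.inter_subset_left
        _ = ps n r := Vr_card hn hL r hr
    · calc (Vr n h r ∩ Icc (n + 1 - j) n).card ≤ (Icc (n + 1 - j) n).card :=
            Finset.card_le_card Finset.inter_subset_right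
        _ ≤ j := by rw [Nat.card_Icc]; omega
  have hsum : ∑ r ∈ Icc 1 n, (Vr n h r ∩ Icc (n + 1 - j) n).card
      = ∑ r ∈ Icc 1 n, min (ps n r) j := by
    have lhs : ∀ r, Vr n h r ∩ Icc (n + 1 - j) n
        = (Icc (n + 1 - j) n).filter (fun k => k ∈ Vr n h r) := by
      intro r; ext x; simp only [Finset.mem_inter, Finset.mem_filter]; tauto
    calc ∑ r ∈ Icc 1 n, (Vr n h r ∩ Icc (n + 1 - j) n).card
        = ∑ r ∈ Icc 1 n, ∑ k ∈ Icc (n + 1 - j) n, (if k ∈ Vr n h r then 1 else 0) := by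
          apply Finset.sum_congr rfl; intro r _; rw [lhs r, Finset.card_filter]
      _ = ∑ k ∈ Icc (n + 1 - j) n, ∑ r ∈ Icc 1 n, (if k ∈ Vr n h r then 1 else 0) :=
          Finset.sum_comm
      _ = ∑ k ∈ Icc (n + 1 - j) n, mk n h k := by
          apply Finset.sum_congr rfl; intro k _
          rw [← Finset.card_filter, mrows_card hL k]
      _ = ∑ k ∈ Icc (n + 1 - j) n, k := by
          apply Finset.sum_congr rfl; intro k hk
          apply mk_eq hn hL hC
          simp only [mem_Icc] at hk ⊢; omega
      _ = ∑ u ∈ Icc 1 n, min u j := (sum_min hn hL j hj).symm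
      _ = ∑ r ∈ Icc 1 n, min (ps n r) j :=
          (sum_comp_eq (ps n) (Icc 1 n) (Icc 1 n) (ps_image n hn) (ps_injOn n hn)
            (fun u => min u j)).symm
  exact fun r hr => ((Finset.sum_eq_sum_iff_of_le hpoint).mp hsum) r hr

include hC in
lemma mask {r c : ℕ} (hr : r ∈ Icc 1 n) (hc : c ∈ Icc 1 n) (hcirc : Circled n (r, c)) :
    n + 1 ≤ ps n r + h (r, c) := by
  by_contra hcon
  set x := h (r, c) with hx
  have hxm := hval hn hL hr hc
  simp only [mem_Icc] at hxm
  have hpsr := ps_mem hn hr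
  simp only [mem_Icc] at hpsr
  have hj : n - x ≤ n := by omega
  have hVtop := Vr_top hn hL hC (n - x) hj r hr
  have hmin : min (ps n r) (n - x) = ps n r := by omega
  rw [hmin] at hVtop
  have hsub : Vr n h r ⊆ Icc (n + 1 - (n - x)) n := by
    have h1 : Vr n h r ∩ Icc (n + 1 - (n - x)) n = Vr n h r := by
      apply Finset.eq_of_subset_of_card_le Finset.inter_subset_left
      rw [hVtop, Vr_card hn hL r hr]
    rw [← h1]
    exact Finset.inter_subset_right
  have hxV : x ∈ Vr n h r := by
    simp only [Vr, Finset.mem_image]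
    exact ⟨c, by simp only [Finset.mem_filter]; exact ⟨hc, hcirc⟩, rfl⟩
  have := hsub hxV
  simp only [mem_Icc] at this
  omega

end Uniq2

section Uniq3

variable {n : ℕ} {h : ℕ × ℕ → ℕ} (hn : 1 ≤ n) (hL : IsLatinSquare n h)
  (hC : ∀ p, Circled n p → h p = Set.ncard {q : ℕ × ℕ | Circled n q ∧ h q = h p})

include hn hL hC

lemma key : ∀ k, 1 ≤ k → k ≤ n → ∀ r c, r ∈ Icc 1 n → c ∈ Icc 1 n → h (r, c) = k →
    ps n r + pt n c + k = n + 1 + (if n + 1 ≤ ps n r + k then n else 0) := by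
  intro k
  induction k using Nat.strong_induction_on with
  | _ k ih =>
  intro hk1 hk2 r₀ c₀ hr₀ hc₀ hv₀
  have hkI : k ∈ Icc 1 n := mem_Icc_of n k hk1 hk2
  choose φ hφ using fun r => row_surj' hn hL r k
  have hφm : ∀ r ∈ Icc 1 n, φ r ∈ Icc 1 n := fun r hr => (hφ r hr hkI).1
  have hφv : ∀ r ∈ Icc 1 n, h (r, φ r) = k := fun r hr => (hφ r hr hkI).2
  have hφinj : Set.InjOn φ (Icc 1 n) := by
    intro r₁ hr₁ r₂ hr₂ heq
    simp only [mem_coe] at hr₁ hr₂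
    by_contra hne
    have hm₁ := hφm r₁ hr₁; have hm₂ := hφm r₂ hr₂
    simp only [mem_Icc] at hr₁ hr₂ hm₁ hm₂
    refine hL.2.2 r₁ r₂ (φ r₁) hr₁.1 hr₁.2 hr₂.1 hr₂.2 hm₁.1 hm₁.2 hne ?_
    rw [hφv r₁ (by simp [mem_Icc]; omega), heq, hφv r₂ (by simp [mem_Icc]; omega)]
  have himg : (Icc 1 n).image φ = Icc 1 n := by
    apply Finset.eq_of_subset_of_card_le
    · intro x hx
      simp only [Finset.mem_image] at hx
      obtain ⟨r, hr, rfl⟩ := hx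
      exact hφm r hr
    · rw [Finset.card_image_of_injOn hφinj]
  -- pointwise upper bound
  have hpt : ∀ r ∈ Icc 1 n,
      ps n r + pt n (φ r) + k ≤ n + 1 + (if n + 1 ≤ ps n r + k then n else 0) := by
    intro r hr
    have hum := ps_mem hn hr; simp only [mem_Icc] at hum
    have hvm := pt_mem hn (hφm r hr); simp only [mem_Icc] at hvm
    have hrI := hr; simp only [mem_Icc] at hrI
    have hφI := hφm r hr; simp only [mem_Icc] at hφI
    split_ifs with H
    · -- high case
      by_contra hbad
      push_neg at hbad
      set j := 2 * n + 1 - ps n r - pt n (φ r) with hj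
      have hj1 : 1 ≤ j := by omega
      have hjk : j < k := by omega
      have hjn : j ≤ n := by omega
      obtain ⟨c', hc'⟩ := row_surj' hn hL r j
      obtain ⟨hc'm, hc'v⟩ := hc' hr (mem_Icc_of n j hj1 hjn)
      have hwm := pt_mem hn hc'm; simp only [mem_Icc] at hwm
      have hih := ih j hjk hj1 hjn r c' hr hc'm hc'v
      rw [if_pos (by omega : n + 1 ≤ ps n r + j)] at hih
      have hptc : pt n c' = pt n (φ r) := by omega
      have : c' = φ r := pt_injOn n hn hc'm (hφm r hr) hptc
      rw [this, hφv r hr] at hc'v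
      omega
    · -- low case
      push_neg at H
      have hnc : ¬ Circled n (r, φ r) := by
        intro hcirc
        have := mask hn hL hC hr (hφm r hr) hcirc
        rw [hφv r hr] at this
        omega
      have huv : ps n r + pt n (φ r) ≤ n := by
        by_contra hcon
        push_neg at hcon
        exact hnc ((circled_iff n r (φ r)).mpr ⟨hrI.1, hrI.2, hφI.1, hφI.2, hcon⟩)
      by_contra hbad
      push_neg at hbad
      set j := n + 1 - ps n r - pt n (φ r) with hj
      have hj1 : 1 ≤ j := by omega
      have hjk : j < k := by omega
      have hjn : j ≤ n := by omega
      obtain ⟨c', hc'⟩ := row_surj' hn hL r j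
      obtain ⟨hc'm, hc'v⟩ := hc' hr (mem_Icc_of n j hj1 hjn)
      have hwm := pt_mem hn hc'm; simp only [mem_Icc] at hwm
      have hih := ih j hjk hj1 hjn r c' hr hc'm hc'v
      rw [if_neg (by omega : ¬ (n + 1 ≤ ps n r + j))] at hih
      have hptc : pt n c' = pt n (φ r) := by omega
      have : c' = φ r := pt_injOn n hn hc'm (hφm r hr) hptc
      rw [this, hφv r hr] at hc'v
      omega
  -- sum equality
  have hsum : ∑ r ∈ Icc 1 n, (ps n r + pt n (φ r) + k)
      = ∑ r ∈ Icc 1 n, (n + 1 + (if n + 1 ≤ ps n r + k then n else 0)) := by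
    have e1 : ∑ r ∈ Icc 1 n, (ps n r + pt n (φ r) + k)
        = (∑ r ∈ Icc 1 n, ps n r) + (∑ r ∈ Icc 1 n, pt n (φ r)) + (Icc 1 n).card * k := by
      rw [Finset.sum_add_distrib, Finset.sum_add_distrib, Finset.sum_const, smul_eq_mul]
    have e2 : ∑ r ∈ Icc 1 n, ps n r = ∑ u ∈ Icc 1 n, u :=
      sum_comp_eq (ps n) (Icc 1 n) (Icc 1 n) (ps_image n hn) (ps_injOn n hn) id
    have e3 : ∑ r ∈ Icc 1 n, pt n (φ r) = ∑ u ∈ Icc 1 n, u := by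
      rw [sum_comp_eq φ (Icc 1 n) (Icc 1 n) himg hφinj (pt n)]
      exact sum_comp_eq (pt n) (Icc 1 n) (Icc 1 n) (pt_image n hn) (pt_injOn n hn) id
    have e4 : ∑ r ∈ Icc 1 n, (n + 1 + (if n + 1 ≤ ps n r + k then n else 0))
        = (Icc 1 n).card * (n + 1) + k * n := by
      rw [Finset.sum_add_distrib, Finset.sum_const, smul_eq_mul]
      congr 1
      rw [← Finset.sum_filter (fun x => n + 1 ≤ ps n x + k) (fun _ => n),
        Finset.sum_const, smul_eq_mul]
      have hcf : ((Icc 1 n).filter (fun x => n + 1 ≤ ps n x + k)).card = k := by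
        rw [card_filter_comp (ps n) (Icc 1 n) (Icc 1 n) (ps_image n hn) (ps_injOn n hn)
          (fun u => n + 1 ≤ u + k)]
        have : ((Icc 1 n).filter (fun u => n + 1 ≤ u + k))
            = (Icc 1 n).filter (fun u => n + 1 ≤ k + u) := by
          apply Finset.filter_congr; intro u _; constructor <;> intro hx <;> omega
        rw [this]
        exact filter_Icc_card n k hk1 hk2
      rw [hcf, Nat.mul_comm]
    have e5 : (Icc 1 n).card = n := by rw [Nat.card_Icc]; omega
    have e6 := gauss hn hL n
    rw [e1, e2, e3, e4, e5]
    have e7 : k * n = n * k := Nat.mul_comm k n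
    rw [e7]
    linarith [e6]
  have heqr := (Finset.sum_eq_sum_iff_of_le hpt).mp hsum r₀ hr₀
  have hc₀φ : c₀ = φ r₀ := by
    apply row_injOn hn hL r₀ hr₀ hc₀ (hφm r₀ hr₀)
    simp only
    rw [hv₀, hφv r₀ hr₀]
  rw [hc₀φ]
  exact heqr

end Uniq3

section Final

variable {n : ℕ} {h : ℕ × ℕ → ℕ} (hn : 1 ≤ n) (hL : IsLatinSquare n h)
  (hC : ∀ p, Circled n p → h p = Set.ncard {q : ℕ × ℕ | Circled n q ∧ h q = h p})

include hn hL hC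

lemma unique_sol (r c : ℕ) (h1 : 1 ≤ r) (h2 : r ≤ n) (h3 : 1 ≤ c) (h4 : c ≤ n) :
    h (r, c) = pg n (r, c) := by
  have hr : r ∈ Icc 1 n := mem_Icc_of n r h1 h2
  have hc : c ∈ Icc 1 n := mem_Icc_of n c h3 h4
  have hkm := hval hn hL hr hc
  simp only [mem_Icc] at hkm
  have hkey := key hn hL hC (h (r, c)) hkm.1 hkm.2 r c hr hc rfl
  have hum := ps_mem hn hr; simp only [mem_Icc] at hum
  have hvm := pt_mem hn hc; simp only [mem_Icc] at hvm
  have hpg := pg_eq n (ps n r) (pt n c) hum.1 hum.2 hvm.1 hvm.2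
  obtain ⟨hpge, hpg1, hpg2⟩ := hpg
  have hpgdef : pg n (r, c) = n - (ps n r + pt n c - 1) % n := rfl
  rw [hpgdef]
  split_ifs at hkey hpge <;> omega

end Final


/-- For every `n ≥ 1` the `n × n` Pulsar puzzle has exactly one solution: there is a
solution, and any two solutions agree on every cell of the grid. -/
theorem pulsar_puzzle_unique_solution (n : ℕ) (hn : 1 ≤ n) :
    ∃ f : ℕ × ℕ → ℕ, IsPulsarSolution n f ∧
      ∀ g : ℕ × ℕ → ℕ, IsPulsarSolution n g →
        ∀ r c, 1 ≤ r → r ≤ n → 1 ≤ c → c ≤ n → g (r, c) = f (r, c) := by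
  refine ⟨pg n, pg_solution n hn, ?_⟩
  intro g hg r c h1 h2 h3 h4
  exact unique_sol hn hg.1 hg.2 r c h1 h2 h3 h4
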